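/- arXiv:2502.05597 — 6 statements merged into one kernel-verified Lean document; each statement's English description precedes it below -/
import Mathlib

section
/- Suppose f and g are binary signatures (functions {0,1}² → ℂ) whose value matrices satisfy M_f · M_g = I (the 2×2 identity), where M_f = [[f(00), f(01)],[f(10), f(11)]] and similarly for g. Then f ∈ 𝒜 if and only if g ∈ 𝒜. -/
/-- `boolF2 b` is the element of `𝔽₂` corresponding to the Boolean value `b`. -/
def boolF2 (b : Bool) : ZMod 2 := if b then 1 else 0

/-- The class `𝒜` of affine signatures: `f` has the form
`λ · χ_{AX=0} · i^{L₁(X)+⋯+L_m(X)}`, where `X = (x₁,…,x_n,1)` over `𝔽₂`,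
`χ_{AX=0}` is the 0–1 indicator of an affine subspace (each row of `A X = 0`
is an affine equation `∑ᵢ A r i · xᵢ = b r`), and each `L_j(X) = ⟨α_j, X⟩`
is an `𝔽₂`-affine form `∑ᵢ α j i · xᵢ + c j ∈ {0,1}`, the exponent sum being
taken over `ℤ` (here over `ℕ`, via `ZMod.val`). -/
def InA {n : ℕ} (f : (Fin n → Bool) → ℂ) : Prop :=
  ∃ (lam : ℂ) (m t : ℕ) (A : Fin m → Fin n → ZMod 2) (b : Fin m → ZMod 2)
    (al : Fin t → Fin n → ZMod 2) (c : Fin t → ZMod 2),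
    ∀ x : Fin n → Bool,
      f x = lam * (if ∀ r, ∑ i, A r i * boolF2 (x i) = b r then 1 else 0) *
        Complex.I ^ (∑ j, ((∑ i, al j i * boolF2 (x i)) + c j).val)

/-- The value matrix `M_f = [[f(00), f(01)],[f(10), f(11)]]` of a binary
signature, with rows indexed by the first input and columns by the second. -/
def valMatrix (f : (Fin 2 → Bool) → ℂ) : Matrix Bool Bool ℂ :=
  Matrix.of fun a b => f ![a, b]

/-- the explicit characterization predicate on the four values -/
def Q4 (a b c d : ℂ) : Prop :=
  (a ≠ 0 ∧ b ≠ 0 ∧ c ≠ 0 ∧ d ≠ 0 ∧ b^4 = a^4 ∧ c^4 = a^4 ∧ a*d = -(b*c)) ∨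
  (b = 0 ∧ c = 0 ∧ a ≠ 0 ∧ d ≠ 0 ∧ d^4 = a^4) ∨
  (a = 0 ∧ d = 0 ∧ b ≠ 0 ∧ c ≠ 0 ∧ c^4 = b^4)

lemma mu4 (z : ℂ) (hz : z^4 = 1) : ∃ p : ℕ, z = Complex.I ^ p := by
  have h : (z-1)*(z+1)*(z-Complex.I)*(z+Complex.I) = 0 := by
    linear_combination hz + (1 - z^2) * Complex.I_sq
  rcases mul_eq_zero.1 h with h | h
  · rcases mul_eq_zero.1 h with h | h
    · rcases mul_eq_zero.1 h with h | h
      · exact ⟨0, by simpa [sub_eq_zero] using h⟩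
      · exact ⟨2, by rw [pow_two, Complex.I_mul_I]; linear_combination h⟩
    · exact ⟨1, by rw [pow_one]; linear_combination h⟩
  · exact ⟨3, by rw [pow_succ, pow_two, Complex.I_mul_I, neg_one_mul]; linear_combination h⟩

lemma ratio_pow (a b : ℂ) (ha : a ≠ 0) (h : b^4 = a^4) : ∃ p : ℕ, b = a * Complex.I ^ p := by
  obtain ⟨p, hp⟩ := mu4 (b/a) (by field_simp; linear_combination h)
  exact ⟨p, by field_simp at hp; linear_combination hp⟩

lemma vec2 (x : Fin 2 → Bool) : x = ![x 0, x 1] := by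
  funext i; fin_cases i <;> rfl

lemma sum3 (k1 k2 k3 : ℕ) (G : Fin (k1+k2+k3) → ℕ) (a1 a2 a3 : ℕ)
    (h1 : ∀ j : Fin k1, G (Fin.castAdd k3 (Fin.castAdd k2 j)) = a1)
    (h2 : ∀ j : Fin k2, G (Fin.castAdd k3 (Fin.natAdd k1 j)) = a2)
    (h3 : ∀ j : Fin k3, G (Fin.natAdd (k1+k2) j) = a3) :
    ∑ j, G j = k1*a1 + k2*a2 + k3*a3 := by
  rw [Fin.sum_univ_add, Fin.sum_univ_add]
  simp [h1, h2, h3, Finset.sum_const, mul_comm]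

lemma QtoInA (f : (Fin 2 → Bool) → ℂ)
    (hQ : Q4 (f ![false,false]) (f ![false,true]) (f ![true,false]) (f ![true,true])) :
    InA f := by
  have vff : (boolF2 false + boolF2 false).val = 0 := rfl
  have vft : (boolF2 false + boolF2 true).val = 1 := rfl
  have vtf : (boolF2 true + boolF2 false).val = 1 := rfl
  have vtt : (boolF2 true + boolF2 true).val = 0 := rfl
  have v0 : (boolF2 false).val = 0 := rfl
  have v1 : (boolF2 true).val = 1 := rfl
  rcases hQ with ⟨ha, hb, hc, hd, hba, hca, hdet⟩ | ⟨hb, hc, ha, hd, hda⟩ | ⟨ha, hd, hb, hc, hcb⟩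
  · -- full support
    obtain ⟨p, hp⟩ := ratio_pow _ _ ha hba
    obtain ⟨q, hq⟩ := ratio_pow _ _ ha hca
    refine ⟨f ![false,false], 0, 3+(q+1)+(p+1), ![], ![],
      Fin.append (Fin.append (fun _ : Fin 3 => ![1,1]) (fun _ : Fin (q+1) => ![1,0]))
        (fun _ : Fin (p+1) => ![0,1]), fun _ => 0, ?_⟩
    intro x
    rw [vec2 x]
    rw [if_pos (fun r : Fin 0 => r.elim0)]
    have hE : ∀ y : Fin 2 → Bool,
        ∑ j, ((∑ i, (Fin.append (Fin.append (fun _ : Fin 3 => (![1,1] : Fin 2 → ZMod 2)) (fun _ : Fin (q+1) => ![1,0]))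
          (fun _ : Fin (p+1) => ![0,1]) j) i * boolF2 (y i)) + 0).val
        = 3 * ((boolF2 (y 0) + boolF2 (y 1)).val) + (q+1) * (boolF2 (y 0)).val
          + (p+1) * (boolF2 (y 1)).val := by
      intro y
      refine sum3 3 (q+1) (p+1) _ _ _ _ ?_ ?_ ?_ <;> intro j <;>
        simp [Fin.sum_univ_two, Fin.append_left, Fin.append_right]
    rw [hE]
    cases hx0 : x 0 <;> cases hx1 : x 1 <;>
      simp only [Matrix.cons_val_zero, Matrix.cons_val_one, Matrix.head_cons,
        vff, vft, vtf, vtt, v0, v1]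
    · norm_num
    · rw [hp, show 3*1 + (q+1)*0 + (p+1)*1 = p+4 by ring, pow_add, Complex.I_pow_four]; ring
    · rw [hq, show 3*1 + (q+1)*1 + (p+1)*0 = q+4 by ring, pow_add, Complex.I_pow_four]; ring
    · refine mul_left_cancel₀ ha ?_
      rw [hdet, hp, hq, show 3*0 + (q+1)*1 + (p+1)*1 = q+p+2 by ring, pow_add, pow_add,
        Complex.I_sq]
      ring
  · -- diagonal
    obtain ⟨p, hp⟩ := ratio_pow _ _ ha hda
    refine ⟨f ![false,false], 1, p, ![![1,1]], ![0], fun _ => ![1,0], fun _ => 0, ?_⟩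
    intro x
    rw [vec2 x]
    cases hx0 : x 0 <;> cases hx1 : x 1
    · rw [if_pos (by decide)]
      simp [Fin.sum_univ_two, boolF2]
    · rw [if_neg (by decide), hb]; ring
    · rw [if_neg (by decide), hc]; ring
    · rw [if_pos (by decide), hp]
      simp [Fin.sum_univ_two, boolF2, Finset.sum_const, show ((1:ZMod 2)).val = 1 from rfl]
  · -- antidiagonal
    obtain ⟨p, hp⟩ := ratio_pow _ _ hb hcb
    refine ⟨f ![false,true], 1, p, ![![1,1]], ![1], fun _ => ![1,0], fun _ => 0, ?_⟩
    intro x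
    rw [vec2 x]
    cases hx0 : x 0 <;> cases hx1 : x 1
    · rw [if_neg (by decide), ha]; ring
    · rw [if_pos (by decide)]
      simp [Fin.sum_univ_two, boolF2]
    · rw [if_pos (by decide), hp]
      simp [Fin.sum_univ_two, boolF2, Finset.sum_const, show ((1:ZMod 2)).val = 1 from rfl]
    · rw [if_neg (by decide), hd]; ring

lemma I_pow_pow4 (k : ℕ) : (Complex.I ^ k) ^ 4 = 1 := by
  rw [← pow_mul, mul_comm, pow_mul, Complex.I_pow_four, one_pow]

lemma sq_form (l : ℂ) (e1 e2 : ℕ) :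
    (l * 1 * Complex.I ^ e1 * (l * 1 * Complex.I ^ e2)) ^ 2 = l ^ 4 * (-1) ^ (e1 + e2) := by
  have : (Complex.I ^ (e1 + e2)) ^ 2 = (-1 : ℂ) ^ (e1 + e2) := by
    rw [← pow_mul, mul_comm, pow_mul, Complex.I_sq]
  rw [show l * 1 * Complex.I ^ e1 * (l * 1 * Complex.I ^ e2)
    = l ^ 2 * Complex.I ^ (e1 + e2) from by rw [pow_add]; ring, mul_pow, this]
  ring

lemma InAtoQ (f : (Fin 2 → Bool) → ℂ) (hf : InA f)
    (hdet : f ![false,false] * f ![true,true] ≠ f ![false,true] * f ![true,false]) :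
    Q4 (f ![false,false]) (f ![false,true]) (f ![true,false]) (f ![true,true]) := by
  obtain ⟨lam, m, t, A, bb, al, cc, hval⟩ := hf
  set P : (Fin 2 → Bool) → Prop :=
    fun y => ∀ r, ∑ i, A r i * boolF2 (y i) = bb r with hPdef
  set E : (Fin 2 → Bool) → ℕ :=
    fun y => ∑ j, ((∑ i, al j i * boolF2 (y i)) + cc j).val with hEdef
  have hval' : ∀ y, f y = lam * (if P y then 1 else 0) * Complex.I ^ (E y) := hval
  have hlam : lam ≠ 0 := by
    intro h0
    apply hdet
    have hz : ∀ y, f y = 0 := fun y => by rw [hval' y, h0]; ring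
    rw [hz ![false,false], hz ![true,true], hz ![false,true], hz ![true,false]]
  have hnz : ∀ y, P y → f y ≠ 0 := by
    intro y hy
    rw [hval' y, if_pos hy]
    exact mul_ne_zero (mul_ne_zero hlam one_ne_zero) (pow_ne_zero _ Complex.I_ne_zero)
  have hzero : ∀ y, ¬ P y → f y = 0 := fun y hy => by rw [hval' y, if_neg hy]; ring
  -- expanded membership equations
  have hPexp : ∀ y, P y ↔ ∀ r, A r 0 * boolF2 (y 0) + A r 1 * boolF2 (y 1) = bb r := by
    intro y
    constructor
    · intro h r; simpa [Fin.sum_univ_two] using h r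
    · intro h r; simpa [Fin.sum_univ_two] using h r
  -- closure lemmas
  have clos1 : P ![false,false] → P ![false,true] → P ![true,false] → P ![true,true] := by
    intro h1 h2 h3
    rw [hPexp] at *
    intro r
    have e1 := h1 r; have e2 := h2 r; have e3 := h3 r
    simp only [Matrix.cons_val_zero, Matrix.cons_val_one, Matrix.head_cons] at *
    linear_combination e2 + e3 - e1
  have clos2 : P ![false,true] → P ![true,false] → P ![true,true] → P ![false,false] := by
    intro h2 h3 h4
    rw [hPexp] at *
    intro r
    have e2 := h2 r; have e3 := h3 r; have e4 := h4 r
    simp only [Matrix.cons_val_zero, Matrix.cons_val_one, Matrix.head_cons] at *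
    linear_combination e2 + e3 - e4
  have clos3 : P ![false,false] → P ![true,false] → P ![true,true] → P ![false,true] := by
    intro h1 h3 h4
    rw [hPexp] at *
    intro r
    have e1 := h1 r; have e3 := h3 r; have e4 := h4 r
    simp only [Matrix.cons_val_zero, Matrix.cons_val_one, Matrix.head_cons] at *
    linear_combination e4 - e3 + e1
  have clos4 : P ![false,false] → P ![false,true] → P ![true,true] → P ![true,false] := by
    intro h1 h2 h4
    rw [hPexp] at *
    intro r
    have e1 := h1 r; have e2 := h2 r; have e4 := h4 r
    simp only [Matrix.cons_val_zero, Matrix.cons_val_one, Matrix.head_cons] at *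
    linear_combination e4 - e2 + e1
  -- parity of exponents
  have valcast : ∀ u : ZMod 2, ((u.val : ℕ) : ZMod 2) = u := by decide
  have h2z : (2 : ZMod 2) = 0 := by decide
  have parity : Even (E ![false,false] + E ![true,true] + (E ![false,true] + E ![true,false])) := by
    have hcast : (((E ![false,false] + E ![true,true] + (E ![false,true] + E ![true,false]) : ℕ)) : ZMod 2) = 0 := by
      simp only [hEdef, Nat.cast_add, Nat.cast_sum, valcast]
      rw [← Finset.sum_add_distrib, ← Finset.sum_add_distrib, ← Finset.sum_add_distrib]
      refine Finset.sum_eq_zero fun j _ => ?_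
      simp only [Fin.sum_univ_two, Matrix.cons_val_zero, Matrix.cons_val_one, Matrix.head_cons]
      have b0 : boolF2 false = 0 := rfl
      have b1 : boolF2 true = 1 := rfl
      rw [b0, b1]
      linear_combination (al j 0 + al j 1 + 2 * cc j) * h2z
    rw [even_iff_two_dvd]
    exact (ZMod.natCast_eq_zero_iff _ 2).1 hcast
  have negpow : ((-1 : ℂ)) ^ (E ![false,false] + E ![true,true])
      = (-1 : ℂ) ^ (E ![false,true] + E ![true,false]) := by
    have h1 : ((-1 : ℂ)) ^ (E ![false,false] + E ![true,true] + (E ![false,true] + E ![true,false])) = 1 :=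
      parity.neg_one_pow
    have hsq : ((-1 : ℂ)) ^ (E ![false,true] + E ![true,false]) * ((-1 : ℂ)) ^ (E ![false,true] + E ![true,false]) = 1 := by
      rw [← pow_add]
      exact (Even.neg_one_pow ⟨_, rfl⟩)
    calc ((-1 : ℂ)) ^ (E ![false,false] + E ![true,true])
        = ((-1 : ℂ)) ^ (E ![false,false] + E ![true,true]) * (((-1 : ℂ)) ^ (E ![false,true] + E ![true,false]) * ((-1 : ℂ)) ^ (E ![false,true] + E ![true,false])) := by
          rw [hsq, mul_one]
      _ = ((-1 : ℂ)) ^ (E ![false,false] + E ![true,true] + (E ![false,true] + E ![true,false])) * ((-1 : ℂ)) ^ (E ![false,true] + E ![true,false]) := by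
          rw [← mul_assoc, ← pow_add]
      _ = _ := by rw [h1, one_mul]
  have pow4 : ∀ y, P y → (f y) ^ 4 = lam ^ 4 := by
    intro y hy
    rw [hval' y, if_pos hy, mul_one, mul_pow, I_pow_pow4, mul_one]
  by_cases pff : P ![false,false] <;> by_cases pft : P ![false,true] <;>
    by_cases ptf : P ![true,false] <;> by_cases ptt : P ![true,true]
  · -- full support
    left
    refine ⟨hnz _ pff, hnz _ pft, hnz _ ptf, hnz _ ptt, ?_, ?_, ?_⟩
    · rw [pow4 _ pft, pow4 _ pff]
    · rw [pow4 _ ptf, pow4 _ pff]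
    · have hsq : (f ![false,false] * f ![true,true]) ^ 2 = (f ![false,true] * f ![true,false]) ^ 2 := by
        rw [hval' ![false,false], hval' ![true,true], hval' ![false,true], hval' ![true,false],
          if_pos pff, if_pos ptt, if_pos pft, if_pos ptf, sq_form, sq_form, negpow]
      have hfac : (f ![false,false] * f ![true,true] - f ![false,true] * f ![true,false])
          * (f ![false,false] * f ![true,true] + f ![false,true] * f ![true,false]) = 0 := by
        linear_combination hsq
      rcases mul_eq_zero.1 hfac with h | h
      · exact absurd (sub_eq_zero.1 h) hdet
      · exact add_eq_zero_iff_eq_neg.1 h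
  · exact absurd (clos1 pff pft ptf) ptt
  · exact absurd (clos4 pff pft ptt) ptf
  · exact absurd (by rw [hzero _ ptf, hzero _ ptt]; ring) hdet
  · exact absurd (clos3 pff ptf ptt) pft
  · exact absurd (by rw [hzero _ pft, hzero _ ptt]; ring) hdet
  · -- diagonal
    right; left
    exact ⟨hzero _ pft, hzero _ ptf, hnz _ pff, hnz _ ptt, by rw [pow4 _ ptt, pow4 _ pff]⟩
  · exact absurd (by rw [hzero _ pft, hzero _ ptt]; ring) hdet
  · exact absurd (clos2 pft ptf ptt) pff
  · -- antidiagonal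
    right; right
    exact ⟨hzero _ pff, hzero _ ptt, hnz _ pft, hnz _ ptf, by rw [pow4 _ ptf, pow4 _ pft]⟩
  · exact absurd (by rw [hzero _ pff, hzero _ ptf]; ring) hdet
  · exact absurd (by rw [hzero _ pff, hzero _ ptf]; ring) hdet
  · exact absurd (by rw [hzero _ pff, hzero _ pft]; ring) hdet
  · exact absurd (by rw [hzero _ pff, hzero _ pft]; ring) hdet
  · exact absurd (by rw [hzero _ pff, hzero _ pft]; ring) hdet
  · exact absurd (by rw [hzero _ pff, hzero _ pft]; ring) hdet
lemma Qtransfer (a b c d w x y z : ℂ)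
    (e1 : a*w + b*y = 1) (e2 : a*x + b*z = 0) (e3 : c*w + d*y = 0) (e4 : c*x + d*z = 1)
    (hQ : Q4 a b c d) : Q4 w x y z := by
  rcases hQ with ⟨ha, hb, hc, hd, hba, hca, hdet⟩ | ⟨hb, hc, ha, hd, hda⟩ | ⟨ha, hd, hb, hc, hcb⟩
  · -- full
    left
    set D : ℂ := a*d - b*c with hD
    have hD0 : D ≠ 0 := by
      rw [hD, hdet]
      intro hcon
      have : b * c = 0 := by linear_combination (-1/2 : ℂ) * hcon
      rcases mul_eq_zero.1 this with h | h
      exacts [hb h, hc h]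
    have hw : D * w = d := by rw [hD]; linear_combination d*e1 - b*e3
    have hy : D * y = -c := by rw [hD]; linear_combination a*e3 - c*e1
    have hx : D * x = -b := by rw [hD]; linear_combination d*e2 - b*e4
    have hz : D * z = a := by rw [hD]; linear_combination a*e4 - c*e2
    have hd4b : d^4 = b^4 := by
      have h1 : a^4 * d^4 = a^4 * b^4 := by
        calc a^4 * d^4 = (a*d)^4 := by ring
        _ = (b*c)^4 := by rw [hdet]; ring
        _ = b^4 * c^4 := by ring
        _ = a^4 * b^4 := by rw [hca]; ring
      exact mul_left_cancel₀ (pow_ne_zero 4 ha) h1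
    have hwne : w ≠ 0 := fun h0 => hd (by rw [h0, mul_zero] at hw; exact hw.symm)
    have hxne : x ≠ 0 := fun h0 => hb (by rw [h0, mul_zero] at hx; exact neg_eq_zero.1 hx.symm)
    have hyne : y ≠ 0 := fun h0 => hc (by rw [h0, mul_zero] at hy; exact neg_eq_zero.1 hy.symm)
    have hzne : z ≠ 0 := fun h0 => ha (by rw [h0, mul_zero] at hz; exact hz.symm)
    have hD4 : (D^4 : ℂ) ≠ 0 := pow_ne_zero 4 hD0
    refine ⟨hwne, hxne, hyne, hzne, ?_, ?_, ?_⟩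
    · refine mul_left_cancel₀ hD4 ?_
      calc D^4 * x^4 = (D*x)^4 := by ring
      _ = b^4 := by rw [hx]; ring
      _ = d^4 := hd4b.symm
      _ = (D*w)^4 := by rw [hw]
      _ = D^4 * w^4 := by ring
    · refine mul_left_cancel₀ hD4 ?_
      calc D^4 * y^4 = (D*y)^4 := by ring
      _ = c^4 := by rw [hy]; ring
      _ = a^4 := hca
      _ = b^4 := hba.symm
      _ = d^4 := hd4b.symm
      _ = (D*w)^4 := by rw [hw]
      _ = D^4 * w^4 := by ring
    · refine mul_left_cancel₀ (mul_ne_zero hD0 hD0) ?_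
      calc D * D * (w * z) = (D*w) * (D*z) := by ring
      _ = d * a := by rw [hw, hz]
      _ = -(b*c) := by linear_combination hdet
      _ = (D*x) * (D*y) * (-1) := by rw [hx, hy]; ring
      _ = D * D * (-(x*y)) := by ring
  · -- diagonal
    right; left
    have hx0 : x = 0 := by
      have : a * x = 0 := by linear_combination e2 - z*hb
      exact (mul_eq_zero.1 this).resolve_left ha
    have hy0 : y = 0 := by
      have : d * y = 0 := by linear_combination e3 - w*hc
      exact (mul_eq_zero.1 this).resolve_left hd
    have hwz : a * w = 1 := by linear_combination e1 - y*hb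
    have hzz : d * z = 1 := by linear_combination e4 - x*hc
    have hwne : w ≠ 0 := fun h0 => one_ne_zero (α := ℂ) (by rw [h0, mul_zero] at hwz; exact hwz.symm)
    have hzne : z ≠ 0 := fun h0 => one_ne_zero (α := ℂ) (by rw [h0, mul_zero] at hzz; exact hzz.symm)
    refine ⟨hx0, hy0, hwne, hzne, ?_⟩
    refine mul_left_cancel₀ (pow_ne_zero 4 ha) ?_
    calc a^4 * z^4 = d^4 * z^4 := by rw [hda]
    _ = (d*z)^4 := by ring
    _ = 1 := by rw [hzz]; ring
    _ = (a*w)^4 := by rw [hwz]; ring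
    _ = a^4 * w^4 := by ring
  · -- antidiagonal
    right; right
    have hw0 : w = 0 := by
      have : c * w = 0 := by linear_combination e3 - y*hd
      exact (mul_eq_zero.1 this).resolve_left hc
    have hz0 : z = 0 := by
      have : b * z = 0 := by linear_combination e2 - x*ha
      exact (mul_eq_zero.1 this).resolve_left hb
    have hyy : b * y = 1 := by linear_combination e1 - w*ha
    have hxx : c * x = 1 := by linear_combination e4 - z*hd
    have hxne : x ≠ 0 := fun h0 => one_ne_zero (α := ℂ) (by rw [h0, mul_zero] at hxx; exact hxx.symm)
    have hyne : y ≠ 0 := fun h0 => one_ne_zero (α := ℂ) (by rw [h0, mul_zero] at hyy; exact hyy.symm)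
    refine ⟨hw0, hz0, hxne, hyne, ?_⟩
    refine mul_left_cancel₀ (pow_ne_zero 4 hb) ?_
    calc b^4 * y^4 = (b*y)^4 := by ring
    _ = 1 := by rw [hyy]; ring
    _ = (c*x)^4 := by rw [hxx]; ring
    _ = c^4 * x^4 := by ring
    _ = b^4 * x^4 := by rw [hcb]

lemma half (f g : (Fin 2 → Bool) → ℂ)
    (h : valMatrix f * valMatrix g = 1) : InA f → InA g := by
  intro hf
  have hent : ∀ i j : Bool,
      f ![i,true] * g ![true,j] + f ![i,false] * g ![false,j] = if i = j then 1 else 0 := by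
    intro i j
    have h0 := Matrix.ext_iff.2 h i j
    rw [Matrix.mul_apply] at h0
    simpa [Fintype.sum_bool, valMatrix, Matrix.one_apply] using h0
  have e1 : f ![false,false] * g ![false,false] + f ![false,true] * g ![true,false] = 1 := by
    have h0 := hent false false; simp at h0; linear_combination h0
  have e2 : f ![false,false] * g ![false,true] + f ![false,true] * g ![true,true] = 0 := by
    have h0 := hent false true; simp at h0; linear_combination h0
  have e3 : f ![true,false] * g ![false,false] + f ![true,true] * g ![true,false] = 0 := by
    have h0 := hent true false; simp at h0; linear_combination h0
  have e4 : f ![true,false] * g ![false,true] + f ![true,true] * g ![true,true] = 1 := by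
    have h0 := hent true true; simp at h0; linear_combination h0
  have hdetf : f ![false,false] * f ![true,true] ≠ f ![false,true] * f ![true,false] := by
    intro heq
    have h14 : (f ![false,false] * g ![false,false] + f ![false,true] * g ![true,false])
        * (f ![true,false] * g ![false,true] + f ![true,true] * g ![true,true]) = 1 := by
      rw [e1, e4]; ring
    have h23 : (f ![false,false] * g ![false,true] + f ![false,true] * g ![true,true])
        * (f ![true,false] * g ![false,false] + f ![true,true] * g ![true,false]) = 0 := by
      rw [e2]; ring
    exact one_ne_zero (α := ℂ) (by linear_combination -h14 + h23
      + (g ![false,false] * g ![true,true] - g ![false,true] * g ![true,false]) * heq)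
  exact QtoInA g (Qtransfer _ _ _ _ _ _ _ _ e1 e2 e3 e4 (InAtoQ f hf hdetf))

/-- if binary signatures `f, g` satisfy `M_f · M_g = I`, then
`f ∈ 𝒜 ↔ g ∈ 𝒜`. -/
theorem stmt1 (f g : (Fin 2 → Bool) → ℂ)
    (h : valMatrix f * valMatrix g = 1) : InA f ↔ InA g :=
  ⟨half f g h, half g f (mul_eq_one_comm.1 h)⟩
end

section
/- Suppose f and g are binary signatures (functions {0,1}² → ℂ) whose value matrices satisfy M_f · M_g = I (the 2×2 identity), where M_f = [[f(00), f(01)],[f(10), f(11)]] and similarly for g. Then f ∈ 𝒫 if and only if g ∈ 𝒫. -/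
/-- A factor on the variables of an arity-`n` signature: either a unary
signature applied to one variable, the binary equality `=₂` applied to a pair
of (not necessarily distinct) variables, or the binary disequality `≠₂`
applied to such a pair. -/
def IsFactor {n : ℕ} (h : (Fin n → Bool) → ℂ) : Prop :=
  (∃ (i : Fin n) (u : Bool → ℂ), ∀ x, h x = u (x i)) ∨
  (∃ i j : Fin n, ∀ x, h x = if x i = x j then 1 else 0) ∨
  (∃ i j : Fin n, ∀ x, h x = if x i = x j then 0 else 1)

/-- The class `𝒫` of product-type signatures: `f ∈ 𝒫` iff `f` is a (pointwise)
product of finitely many factors, each of which is a unary signature, `=₂`, or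
`≠₂`, applied to not necessarily disjoint subsets of the variables. -/
def InP {n : ℕ} (f : (Fin n → Bool) → ℂ) : Prop :=
  ∃ (t : ℕ) (hs : Fin t → (Fin n → Bool) → ℂ),
    (∀ j, IsFactor (hs j)) ∧ ∀ x, f x = ∏ j, hs j x

lemma eval2 (f : (Fin 2 → Bool) → ℂ) (x : Fin 2 → Bool) : f x = f ![x 0, x 1] := by
  congr 1; funext i; fin_cases i <;> rfl

lemma InP_congr {n : ℕ} {f g : (Fin n → Bool) → ℂ} (h : ∀ x, f x = g x) :
    InP g → InP f := by
  rintro ⟨t, hs, h1, h2⟩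
  exact ⟨t, hs, h1, fun x => (h x).trans (h2 x)⟩

lemma InP_uv (u v : Bool → ℂ) : InP (fun x : Fin 2 → Bool => u (x 0) * v (x 1)) := by
  refine ⟨2, ![fun x => u (x 0), fun x => v (x 1)], ?_, ?_⟩
  · intro j; fin_cases j
    · exact Or.inl ⟨0, u, fun x => rfl⟩
    · exact Or.inl ⟨1, v, fun x => rfl⟩
  · intro x; rw [Fin.prod_univ_two]; rfl

lemma InP_eqd (u : Bool → ℂ) :
    InP (fun x : Fin 2 → Bool => (if x 0 = x 1 then (1:ℂ) else 0) * u (x 0)) := by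
  refine ⟨2, ![fun x => if x 0 = x 1 then 1 else 0, fun x => u (x 0)], ?_, ?_⟩
  · intro j; fin_cases j
    · exact Or.inr (Or.inl ⟨0, 1, fun x => rfl⟩)
    · exact Or.inl ⟨0, u, fun x => rfl⟩
  · intro x; rw [Fin.prod_univ_two]; rfl

lemma InP_neqd (u : Bool → ℂ) :
    InP (fun x : Fin 2 → Bool => (if x 0 = x 1 then (0:ℂ) else 1) * u (x 0)) := by
  refine ⟨2, ![fun x => if x 0 = x 1 then 0 else 1, fun x => u (x 0)], ?_, ?_⟩
  · intro j; fin_cases j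
    · exact Or.inr (Or.inr ⟨0, 1, fun x => rfl⟩)
    · exact Or.inl ⟨0, u, fun x => rfl⟩
  · intro x; rw [Fin.prod_univ_two]; rfl

lemma char2 (f : (Fin 2 → Bool) → ℂ) :
    InP f ↔ (f ![false, true] = 0 ∧ f ![true, false] = 0) ∨
      (f ![false, false] = 0 ∧ f ![true, true] = 0) ∨
      f ![false, false] * f ![true, true] = f ![false, true] * f ![true, false] := by
  constructor
  · rintro ⟨t, hs, hfac, hprod⟩
    have key : ∀ j, (hs j ![false, true] = 0 ∧ hs j ![true, false] = 0) ∨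
        (hs j ![false, false] = 0 ∧ hs j ![true, true] = 0) ∨
        hs j ![false, false] * hs j ![true, true] =
          hs j ![false, true] * hs j ![true, false] := by
      intro j
      rcases hfac j with ⟨i, u, hu⟩ | ⟨i, j', hij⟩ | ⟨i, j', hij⟩
      · right; right; fin_cases i <;> simp [hu] <;> ring
      · fin_cases i <;> fin_cases j' <;> simp [hij]
      · fin_cases i <;> fin_cases j' <;> simp [hij]
    by_cases hbc : ∃ j, hs j ![false, true] = 0 ∧ hs j ![true, false] = 0
    · obtain ⟨j, hj1, hj2⟩ := hbc
      exact Or.inl ⟨by rw [hprod]; exact Finset.prod_eq_zero (Finset.mem_univ j) hj1,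
        by rw [hprod]; exact Finset.prod_eq_zero (Finset.mem_univ j) hj2⟩
    by_cases had : ∃ j, hs j ![false, false] = 0 ∧ hs j ![true, true] = 0
    · obtain ⟨j, hj1, hj2⟩ := had
      exact Or.inr (Or.inl ⟨by rw [hprod]; exact Finset.prod_eq_zero (Finset.mem_univ j) hj1,
        by rw [hprod]; exact Finset.prod_eq_zero (Finset.mem_univ j) hj2⟩)
    · right; right
      rw [hprod, hprod, hprod, hprod, ← Finset.prod_mul_distrib, ← Finset.prod_mul_distrib]
      refine Finset.prod_congr rfl fun j _ => ?_
      rcases key j with hj | hj | hj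
      · exact absurd ⟨j, hj⟩ hbc
      · exact absurd ⟨j, hj⟩ had
      · exact hj
  · rintro (⟨hb, hc⟩ | ⟨ha, hd⟩ | hdet)
    · refine InP_congr ?_ (InP_eqd (fun s => f ![s, s]))
      intro x
      rw [eval2 f x]
      cases hx0 : x 0 <;> cases hx1 : x 1 <;> simp [hx0, hx1, hb, hc]
    · refine InP_congr ?_ (InP_neqd (fun s => f ![s, !s]))
      intro x
      rw [eval2 f x]
      cases hx0 : x 0 <;> cases hx1 : x 1 <;> simp [hx0, hx1, ha, hd]
    · by_cases ha : f ![false, false] = 0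
      · by_cases hb : f ![false, true] = 0
        · refine InP_congr ?_ (InP_uv (fun s => if s then (1:ℂ) else 0)
            (fun s => if s then f ![true, true] else f ![true, false]))
          intro x
          rw [eval2 f x]
          cases hx0 : x 0 <;> cases hx1 : x 1 <;> simp [hx0, hx1, ha, hb]
        · have hc : f ![true, false] = 0 := by
            have := hdet
            rw [ha, zero_mul] at this
            rcases mul_eq_zero.mp this.symm with h' | h'
            · exact absurd h' hb
            · exact h'
          refine InP_congr ?_ (InP_uv (fun s => if s then f ![true, true] else f ![false, true])
            (fun s => if s then (1:ℂ) else 0))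
          intro x
          rw [eval2 f x]
          cases hx0 : x 0 <;> cases hx1 : x 1 <;> simp [hx0, hx1, ha, hc]
      · refine InP_congr ?_ (InP_uv (fun s => if s then f ![true, false] else f ![false, false])
          (fun s => if s then f ![false, true] / f ![false, false] else 1))
        intro x
        rw [eval2 f x]
        cases hx0 : x 0 <;> cases hx1 : x 1 <;> simp [hx0, hx1]
        · field_simp
        · field_simp
          linear_combination hdet

/-- if binary signatures `f, g` satisfy `M_f · M_g = I`, then
`f ∈ 𝒫 ↔ g ∈ 𝒫`. -/
theorem stmt2 (f g : (Fin 2 → Bool) → ℂ)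
    (h : valMatrix f * valMatrix g = 1) : InP f ↔ InP g := by
  have main : ∀ f g : (Fin 2 → Bool) → ℂ, valMatrix f * valMatrix g = 1 → InP f → InP g := by
    intro f g h hf
    have e1 := congrFun (congrFun h false) false
    have e2 := congrFun (congrFun h false) true
    have e3 := congrFun (congrFun h true) false
    have e4 := congrFun (congrFun h true) true
    simp [valMatrix, Matrix.mul_apply, Fintype.sum_bool, Matrix.one_apply] at e1 e2 e3 e4
    rcases (char2 f).mp hf with ⟨hb, hc⟩ | ⟨ha, hd⟩ | hdet
    · refine (char2 g).mpr (Or.inl ⟨?_, ?_⟩)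
      · rw [hb, zero_mul, zero_add] at e1 e2
        exact (mul_eq_zero.mp e2).resolve_left (left_ne_zero_of_mul_eq_one e1)
      · rw [hc, zero_mul, add_zero] at e3 e4
        exact (mul_eq_zero.mp e3).resolve_left (left_ne_zero_of_mul_eq_one e4)
    · refine (char2 g).mpr (Or.inr (Or.inl ⟨?_, ?_⟩))
      · rw [hd, zero_mul, zero_add] at e3 e4
        exact (mul_eq_zero.mp e3).resolve_left (left_ne_zero_of_mul_eq_one e4)
      · rw [ha, zero_mul, add_zero] at e1 e2
        exact (mul_eq_zero.mp e2).resolve_left (left_ne_zero_of_mul_eq_one e1)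
    · exfalso
      have k1 : (f ![false, true] * g ![true, false] + f ![false, false] * g ![false, false]) *
          (f ![true, true] * g ![true, true] + f ![true, false] * g ![false, true]) = 1 := by
        rw [e1, e4, one_mul]
      have k2 : (f ![false, true] * g ![true, true] + f ![false, false] * g ![false, true]) *
          (f ![true, true] * g ![true, false] + f ![true, false] * g ![false, false]) = 0 := by
        rw [e2, zero_mul]
      have : (1 : ℂ) = 0 := by
        linear_combination k2 - k1 +
          (g ![false, false] * g ![true, true] - g ![false, true] * g ![true, false]) * hdet
      exact one_ne_zero this
  exact ⟨main f g h, main g f (mul_eq_one_comm.mp h)⟩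
end

section
/- Let f be a signature of arity n and α ∈ supp(f). If #0(α) − #1(α) = k > 0, then there exists a signature g of arity k, obtained from f by a sequence of ≠₂-self-loops, such that g(0^k) ≠ 0, where 0^k is the all-zero string. Symmetrically, if #1(α) − #0(α) = k > 0, then there exists a signature g of arity k, obtained from f by a sequence of ≠₂-self-loops, such that g(1^k) ≠ 0, where 1^k is the all-one string. -/
/-- Number of `1`s (Hamming weight) of a Boolean string. -/
def wt1 {n : ℕ} (x : Fin n → Bool) : ℕ := (Finset.univ.filter fun i => x i = true).card

/-- Number of `0`s of a Boolean string. -/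
def wt0 {n : ℕ} (x : Fin n → Bool) : ℕ := (Finset.univ.filter fun i => x i = false).card

/-- The `≠₂`-self-loop of a signature `f` of arity `n+2`, connecting the
variable at position `i` with the variable at position `j` among the remaining
ones: `x ↦ f(x with xᵢ=0, xⱼ=1) + f(x with xᵢ=1, xⱼ=0)`. -/
noncomputable def selfLoop {n : ℕ} (f : (Fin (n + 2) → Bool) → ℂ)
    (i : Fin (n + 2)) (j : Fin (n + 1)) : (Fin n → Bool) → ℂ :=
  fun x => f (i.insertNth false (j.insertNth true x)) +
    f (i.insertNth true (j.insertNth false x))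

/-- `LoopReach n f m g` : the arity-`m` signature `g` is obtained from the
arity-`n` signature `f` by a finite (possibly empty) sequence of
`≠₂`-self-loops. -/
inductive LoopReach : (n : ℕ) → ((Fin n → Bool) → ℂ) → (m : ℕ) → ((Fin m → Bool) → ℂ) → Prop
  | refl (n : ℕ) (f : (Fin n → Bool) → ℂ) : LoopReach n f n f
  | step {n : ℕ} {f : (Fin n → Bool) → ℂ} {m : ℕ} {g : (Fin (m + 2) → Bool) → ℂ}
      (h : LoopReach n f (m + 2) g) (i : Fin (m + 2)) (j : Fin (m + 1)) :
      LoopReach n f m (selfLoop g i j)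

/- ============ auxiliary lemmas ============ -/

lemma wt1_eq_sum {n : ℕ} (x : Fin n → Bool) : wt1 x = ∑ i, (x i).toNat := by
  rw [wt1, Finset.card_filter]
  exact Finset.sum_congr rfl fun i _ => by cases h : x i <;> simp

lemma wt0_eq_sum {n : ℕ} (x : Fin n → Bool) : wt0 x = ∑ i, (!(x i)).toNat := by
  rw [wt0, Finset.card_filter]
  exact Finset.sum_congr rfl fun i _ => by cases h : x i <;> simp

lemma wt1_insertNth {n : ℕ} (p : Fin (n+1)) (b : Bool) (v : Fin n → Bool) :
    wt1 (p.insertNth b v) = b.toNat + wt1 v := by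
  rw [wt1_eq_sum, Fin.sum_univ_succAbove _ p, wt1_eq_sum]
  simp

lemma wt0_insertNth {n : ℕ} (p : Fin (n+1)) (b : Bool) (v : Fin n → Bool) :
    wt0 (p.insertNth b v) = (!b).toNat + wt0 v := by
  rw [wt0_eq_sum, Fin.sum_univ_succAbove _ p, wt0_eq_sum]
  simp

lemma decomp {m : ℕ} (β : Fin (m+2) → Bool) (p q : Fin (m+2)) (hpq : q ≠ p)
    (hp : β p = true) (hq : β q = false) :
    ∃ (j : Fin (m+1)) (γ : Fin m → Bool),
      β = p.insertNth true (j.insertNth false γ) ∧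
      Function.update (Function.update β p false) q true
        = p.insertNth false (j.insertNth true γ) := by
  obtain ⟨j, hj⟩ := Fin.exists_succAbove_eq hpq
  set δ := p.removeNth β with hδ
  have hδj : δ j = false := by rw [hδ]; show β (p.succAbove j) = false; rw [hj, hq]
  refine ⟨j, j.removeNth δ, ?_, ?_⟩
  · have h1 : j.insertNth (δ j) (j.removeNth δ) = δ := Fin.insertNth_self_removeNth j δ
    have h2 : p.insertNth (β p) δ = β := Fin.insertNth_self_removeNth p β
    rw [← hp, ← hδj, h1, h2]
  · funext x
    rcases eq_or_ne x p with rfl | hxp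
    · rw [Function.update_apply, if_neg (Ne.symm hpq), Function.update_self,
        Fin.insertNth_apply_same]
    · obtain ⟨y, hy⟩ := Fin.exists_succAbove_eq hxp
      subst hy
      rw [Fin.insertNth_apply_succAbove]
      rcases eq_or_ne y j with rfl | hyj
      · rw [hj, Function.update_self, Fin.insertNth_apply_same]
      · obtain ⟨z, hz⟩ := Fin.exists_succAbove_eq hyj
        subst hz
        rw [Fin.insertNth_apply_succAbove]
        have hne : p.succAbove (j.succAbove z) ≠ q := by
          rw [← hj]; exact fun h => (Fin.succAbove_ne j z) (Fin.succAbove_right_injective h)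
        rw [Function.update_apply, if_neg hne, Function.update_apply,
          if_neg (Fin.succAbove_ne p _)]
        rfl

lemma loop_pair {m k : ℕ} (f : (Fin (m+2) → Bool) → ℂ)
    (H : ∀ (i : Fin (m+2)) (j : Fin (m+1)) (γ : Fin m → Bool),
      wt0 γ = wt1 γ + k → selfLoop f i j γ = 0)
    (β : Fin (m+2) → Bool) (hβ : wt0 β = wt1 β + k)
    (p q : Fin (m+2)) (hpq : q ≠ p) (hp : β p = true) (hq : β q = false) :
    f (Function.update (Function.update β p false) q true) = - f β ∧
    wt0 (Function.update (Function.update β p false) q true)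
      = wt1 (Function.update (Function.update β p false) q true) + k := by
  obtain ⟨j, γ, h1, h2⟩ := decomp β p q hpq hp hq
  have hw1 : wt1 β = 1 + wt1 γ := by
    rw [h1, wt1_insertNth, wt1_insertNth]; simp
  have hw0 : wt0 β = 1 + wt0 γ := by
    rw [h1, wt0_insertNth, wt0_insertNth]; simp
  have hγ : wt0 γ = wt1 γ + k := by omega
  have hsum : f (p.insertNth false (j.insertNth true γ))
      + f (p.insertNth true (j.insertNth false γ)) = 0 := H p j γ hγ
  rw [← h1, ← h2] at hsum
  constructor
  · exact eq_neg_of_add_eq_zero_left hsum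
  · rw [h2, wt0_insertNth, wt0_insertNth, wt1_insertNth, wt1_insertNth]
    simp
    omega

lemma loopReach_trans {a b c : ℕ} {f : (Fin a → Bool) → ℂ} {g : (Fin b → Bool) → ℂ}
    {h : (Fin c → Bool) → ℂ} (h1 : LoopReach a f b g) (h2 : LoopReach b g c h) :
    LoopReach a f c h := by
  induction h2 with
  | refl => exact h1
  | step h' i j ih => exact LoopReach.step ih i j

lemma main (k : ℕ) (hk : 0 < k) : ∀ n (f : (Fin n → Bool) → ℂ) (α : Fin n → Bool),
    wt0 α = wt1 α + k → f α ≠ 0 →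
    ∃ g : (Fin k → Bool) → ℂ, LoopReach n f k g ∧ g (fun _ => false) ≠ 0 := by
  intro n
  induction n using Nat.strong_induction_on with
  | _ n IH =>
  intro f α hα hf
  rcases Nat.eq_zero_or_pos (wt1 α) with h1 | h1
  · have hfil : (Finset.univ.filter fun i => α i = true) = ∅ := Finset.card_eq_zero.mp h1
    have hall : ∀ i, α i = false := by
      intro i
      by_contra hc
      have hmem : i ∈ (Finset.univ.filter fun i => α i = true) :=
        Finset.mem_filter.mpr ⟨Finset.mem_univ i, by simpa using hc⟩
      rw [hfil] at hmem
      simp at hmem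
    have h0 : wt0 α = n := by
      rw [wt0, Finset.filter_true_of_mem (fun i _ => hall i)]
      simp
    have hnk : n = k := by omega
    subst hnk
    refine ⟨f, LoopReach.refl _ _, ?_⟩
    have hce : α = fun _ => false := funext hall
    rwa [← hce]
  · obtain ⟨p, hpmem⟩ := Finset.card_pos.mp h1
    have hp : α p = true := (Finset.mem_filter.mp hpmem).2
    have h2c : 1 < wt0 α := by omega
    obtain ⟨q, hqmem, r, hrmem, hqr⟩ := Finset.one_lt_card.mp h2c
    have hq : α q = false := (Finset.mem_filter.mp hqmem).2
    have hr : α r = false := (Finset.mem_filter.mp hrmem).2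
    have hwle : wt0 α ≤ n := le_trans (Finset.card_filter_le _ _) (by simp)
    obtain ⟨m, rfl⟩ : ∃ m, n = m + 2 := ⟨n - 2, by omega⟩
    by_cases hH : ∃ i j γ, wt0 γ = wt1 γ + k ∧ selfLoop f i j γ ≠ 0
    · obtain ⟨i, j, γ, hγ, hne⟩ := hH
      obtain ⟨g, hg, hgne⟩ := IH m (by omega) (selfLoop f i j) γ hγ hne
      exact ⟨g, loopReach_trans (LoopReach.step (LoopReach.refl _ f) i j) hg, hgne⟩
    · push_neg at hH
      exfalso
      have hqp : q ≠ p := fun h => by rw [h, hp] at hq; exact Bool.noConfusion hq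
      have hrp : r ≠ p := fun h => by rw [h, hp] at hr; exact Bool.noConfusion hr
      set α1 := Function.update (Function.update α p false) q true with hα1
      obtain ⟨e1, w1⟩ := loop_pair f hH α hα p q hqp hp hq
      have hα1q : α1 q = true := by simp [hα1]
      have hα1r : α1 r = false := by
        rw [hα1, Function.update_apply, if_neg hqr.symm, Function.update_apply, if_neg hrp]
        exact hr
      set α2 := Function.update (Function.update α1 q false) r true with hα2
      obtain ⟨e2, w2⟩ := loop_pair f hH α1 w1 q r hqr.symm hα1q hα1r
      have hα2r : α2 r = true := by simp [hα2]
      have hα2p : α2 p = false := by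
        rw [hα2, Function.update_apply, if_neg hrp.symm, Function.update_apply,
          if_neg (Ne.symm hqp), hα1, Function.update_apply, if_neg (Ne.symm hqp),
          Function.update_self]
      obtain ⟨e3, _⟩ := loop_pair f hH α2 w2 r p (Ne.symm hrp) hα2r hα2p
      have hback : Function.update (Function.update α2 r false) p true = α := by
        funext x
        simp only [hα2, hα1, Function.update_apply]
        split_ifs with hxp hxr hxq <;> simp_all
      rw [hback, e2, e1] at e3
      have hzero : f α = 0 := by linear_combination e3 / 2
      exact hf hzero

noncomputable def negSig {n : ℕ} (f : (Fin n → Bool) → ℂ) : (Fin n → Bool) → ℂ :=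
  fun x => f fun i => !(x i)

lemma not_insertNth {n : ℕ} (p : Fin (n+1)) (b : Bool) (v : Fin n → Bool) :
    Bool.not ∘ p.insertNth b v = p.insertNth (!b) (Bool.not ∘ v) := by
  funext x
  rcases eq_or_ne x p with rfl | h
  · simp
  · obtain ⟨y, hy⟩ := Fin.exists_succAbove_eq h
    subst hy
    rw [Function.comp_apply, Fin.insertNth_apply_succAbove, Fin.insertNth_apply_succAbove,
      Function.comp_apply]

lemma selfLoop_negSig {n : ℕ} (f : (Fin (n + 2) → Bool) → ℂ) (i : Fin (n + 2))
    (j : Fin (n + 1)) : selfLoop (negSig f) i j = negSig (selfLoop f i j) := by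
  funext x
  show f (Bool.not ∘ i.insertNth false (j.insertNth true x))
      + f (Bool.not ∘ i.insertNth true (j.insertNth false x))
    = f (i.insertNth false (j.insertNth true (Bool.not ∘ x)))
      + f (i.insertNth true (j.insertNth false (Bool.not ∘ x)))
  rw [not_insertNth, not_insertNth, not_insertNth, not_insertNth]
  simp only [Bool.not_false, Bool.not_true]
  rw [add_comm]

lemma loopReach_neg {n : ℕ} {f : (Fin n → Bool) → ℂ} {m : ℕ} {g : (Fin m → Bool) → ℂ}
    (h : LoopReach n f m g) : LoopReach n (negSig f) m (negSig g) := by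
  induction h with
  | refl => exact LoopReach.refl _ _
  | step h' i j ih =>
    rw [← selfLoop_negSig]
    exact LoopReach.step ih i j

lemma wt0_not {n : ℕ} (x : Fin n → Bool) : wt0 (fun i => !(x i)) = wt1 x := by
  unfold wt0 wt1
  congr 1
  ext i
  simp

lemma wt1_not {n : ℕ} (x : Fin n → Bool) : wt1 (fun i => !(x i)) = wt0 x := by
  unfold wt0 wt1
  congr 1
  ext i
  simp


/-- if `α ∈ supp(f)` and `#0(α) − #1(α) = k > 0`, then a sequence
of `≠₂`-self-loops applied to `f` yields an arity-`k` signature `g` with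
`g(0^k) ≠ 0`; symmetrically, if `#1(α) − #0(α) = k > 0`, then such a sequence
yields an arity-`k` signature `g` with `g(1^k) ≠ 0`. -/
theorem stmt3 {n : ℕ} (f : (Fin n → Bool) → ℂ) (α : Fin n → Bool) (hα : f α ≠ 0)
    (k : ℕ) (hk : 0 < k) :
    (wt0 α = wt1 α + k →
      ∃ g : (Fin k → Bool) → ℂ, LoopReach n f k g ∧ g (fun _ => false) ≠ 0) ∧
    (wt1 α = wt0 α + k →
      ∃ g : (Fin k → Bool) → ℂ, LoopReach n f k g ∧ g (fun _ => true) ≠ 0) := by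
  constructor
  · intro h
    exact main k hk n f α h hα
  · intro h
    obtain ⟨g', hg', hne⟩ := main k hk n (negSig f) (fun i => !(α i))
      (by rw [wt0_not, wt1_not, h]) (by simpa [negSig, Bool.not_not] using hα)
    have hnn : negSig (negSig f) = f := by
      funext x
      simp [negSig, Bool.not_not]
    have hr := loopReach_neg hg'
    rw [hnn] at hr
    refine ⟨negSig g', hr, ?_⟩
    show g' (fun i => !true) ≠ 0
    simpa using hne
end

section
/- Let K = (1/√2)·[[1, 1],[i, −i]] ∈ M₂(ℂ), and let X = [[0,1],[1,0]]. For every complex orthogonal 2×2 matrix O (i.e., Oᵀ·O = I), there exists an invertible diagonal matrix D ∈ M₂(ℂ) such that O·K = K·D or O·K = K·X·D. Equivalently, K⁻¹·O·K is either a diagonal or an anti-diagonal invertible matrix. -/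
open Matrix

/-- The matrix `K = (1/√2)·[[1, 1],[i, −i]]`. -/
noncomputable def Kmat : Matrix (Fin 2) (Fin 2) ℂ :=
  ((Real.sqrt 2 : ℂ))⁻¹ • !![1, 1; Complex.I, -Complex.I]

/-- for every complex orthogonal 2×2 matrix `O` (`Oᵀ·O = 1`)
there is an invertible diagonal matrix `D = [[d₁,0],[0,d₂]]` with
`O·K = K·D` or `O·K = K·X·D`, where `X = [[0,1],[1,0]]`. -/
theorem stmt6 (O : Matrix (Fin 2) (Fin 2) ℂ) (hO : Oᵀ * O = 1) :
    ∃ d₁ d₂ : ℂ, d₁ ≠ 0 ∧ d₂ ≠ 0 ∧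
      (O * Kmat = Kmat * !![d₁, 0; 0, d₂] ∨
        O * Kmat = Kmat * !![(0 : ℂ), 1; 1, 0] * !![d₁, 0; 0, d₂]) := by
  have e1 : O 0 0 * O 0 0 + O 1 0 * O 1 0 = 1 := by
    have := congrFun (congrFun hO 0) 0
    simpa [Matrix.mul_apply, Matrix.transpose_apply, Fin.sum_univ_two,
      Matrix.one_apply] using this
  have e2 : O 0 0 * O 0 1 + O 1 0 * O 1 1 = 0 := by
    have := congrFun (congrFun hO 0) 1
    simpa [Matrix.mul_apply, Matrix.transpose_apply, Fin.sum_univ_two,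
      Matrix.one_apply] using this
  have e3 : O 0 1 * O 0 1 + O 1 1 * O 1 1 = 1 := by
    have := congrFun (congrFun hO 1) 1
    simpa [Matrix.mul_apply, Matrix.transpose_apply, Fin.sum_univ_two,
      Matrix.one_apply] using this
  have hdet : (O 0 0 * O 1 1 - O 0 1 * O 1 0 - 1) *
      (O 0 0 * O 1 1 - O 0 1 * O 1 0 + 1) = 0 := by
    linear_combination (O 0 1 * O 0 1 + O 1 1 * O 1 1) * e1 + e3 -
      (O 0 0 * O 0 1 + O 1 0 * O 1 1) * e2
  have hI : Complex.I * Complex.I = -1 := Complex.I_mul_I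
  rcases mul_eq_zero.mp hdet with h | h
  · -- det = 1 : rotation
    have hdet1 : O 0 0 * O 1 1 - O 0 1 * O 1 0 = 1 := by linear_combination h
    have hb' : O 0 1 = -(O 1 0) := by
      linear_combination O 0 0 * e2 - O 1 0 * hdet1 - O 0 1 * e1
    have hd' : O 1 1 = O 0 0 := by
      linear_combination O 1 0 * e2 + O 0 0 * hdet1 - O 1 1 * e1
    refine ⟨O 0 0 - O 1 0 * Complex.I, O 0 0 + O 1 0 * Complex.I, ?_, ?_, Or.inl ?_⟩
    · have hprod : (O 0 0 - O 1 0 * Complex.I) * (O 0 0 + O 1 0 * Complex.I) = 1 := by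
        linear_combination e1 - O 1 0 * O 1 0 * hI
      exact left_ne_zero_of_mul_eq_one hprod
    · have hprod : (O 0 0 + O 1 0 * Complex.I) * (O 0 0 - O 1 0 * Complex.I) = 1 := by
        linear_combination e1 - O 1 0 * O 1 0 * hI
      exact left_ne_zero_of_mul_eq_one hprod
    · ext i j
      fin_cases i <;> fin_cases j <;>
        simp [Kmat, Matrix.mul_apply, Fin.sum_univ_two, Matrix.smul_apply,
          Fin.mk_zero, Fin.mk_one, hb', hd'] <;>
        first
        | linear_combination ((Real.sqrt 2 : ℂ))⁻¹ * Complex.I * hb'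
        | linear_combination (-(((Real.sqrt 2 : ℂ))⁻¹ * Complex.I)) * hb'
        | linear_combination ((Real.sqrt 2 : ℂ))⁻¹ * O 1 0 * hI + ((Real.sqrt 2 : ℂ))⁻¹ * Complex.I * hd'
        | linear_combination ((Real.sqrt 2 : ℂ))⁻¹ * O 1 0 * hI - ((Real.sqrt 2 : ℂ))⁻¹ * Complex.I * hd'
        | linear_combination ((Real.sqrt 2 : ℂ))⁻¹ * O 1 0 * hI
        | linear_combination (-(((Real.sqrt 2 : ℂ))⁻¹ * O 1 0)) * hI
        | ring
  · -- det = -1 : reflection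
    have hdet1 : O 0 0 * O 1 1 - O 0 1 * O 1 0 = -1 := by linear_combination h
    have hb' : O 0 1 = O 1 0 := by
      linear_combination O 0 0 * e2 - O 1 0 * hdet1 - O 0 1 * e1
    have hd' : O 1 1 = -(O 0 0) := by
      linear_combination O 1 0 * e2 + O 0 0 * hdet1 - O 1 1 * e1
    refine ⟨O 0 0 + O 1 0 * Complex.I, O 0 0 - O 1 0 * Complex.I, ?_, ?_, Or.inr ?_⟩
    · have hprod : (O 0 0 + O 1 0 * Complex.I) * (O 0 0 - O 1 0 * Complex.I) = 1 := by
        linear_combination e1 - O 1 0 * O 1 0 * hI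
      exact left_ne_zero_of_mul_eq_one hprod
    · have hprod : (O 0 0 - O 1 0 * Complex.I) * (O 0 0 + O 1 0 * Complex.I) = 1 := by
        linear_combination e1 - O 1 0 * O 1 0 * hI
      exact left_ne_zero_of_mul_eq_one hprod
    · ext i j
      fin_cases i <;> fin_cases j <;>
        simp [Kmat, Matrix.mul_apply, Fin.sum_univ_two, Matrix.smul_apply,
          Fin.mk_zero, Fin.mk_one, hb', hd'] <;>
        first
        | linear_combination ((Real.sqrt 2 : ℂ))⁻¹ * Complex.I * hb'
        | linear_combination (-(((Real.sqrt 2 : ℂ))⁻¹ * Complex.I)) * hb'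
        | linear_combination ((Real.sqrt 2 : ℂ))⁻¹ * O 1 0 * hI + ((Real.sqrt 2 : ℂ))⁻¹ * Complex.I * hd'
        | linear_combination ((Real.sqrt 2 : ℂ))⁻¹ * O 1 0 * hI - ((Real.sqrt 2 : ℂ))⁻¹ * Complex.I * hd'
        | linear_combination ((Real.sqrt 2 : ℂ))⁻¹ * O 1 0 * hI
        | linear_combination (-(((Real.sqrt 2 : ℂ))⁻¹ * O 1 0)) * hI
        | ring
end

section
/- Let f be a signature of arity k ≥ 3 and let α, β ∈ supp(f) be such that at least one of α, β is not in {0^k, 1^k} (the all-zero and all-one strings). Then there exists a signature f′ of arity k−1 or k−2, obtained from f by one of the following single operations: pinning one variable to a constant, pinning two variables to constants, or applying one ≠₂-self-loop, together with strings α′, β′ ∈ supp(f′) satisfying #1(α′) − #1(β′) = #1(α) − #1(β). -/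
/-- Pinning the `i`-th variable of `f` to the constant `c`. -/
noncomputable def pinSig {n : ℕ} (f : (Fin (n + 1) → Bool) → ℂ) (i : Fin (n + 1)) (c : Bool) :
    (Fin n → Bool) → ℂ :=
  fun x => f (i.insertNth c x)

lemma wt1_insertNth_s9 {n : ℕ} (i : Fin (n + 1)) (c : Bool) (x : Fin n → Bool) :
    wt1 (i.insertNth c x) = (if c then 1 else 0) + wt1 x := by
  unfold wt1
  rw [Finset.card_filter, Finset.card_filter, Fin.sum_univ_succAbove _ i]
  simp

lemma pin_case {n : ℕ} (f : (Fin (n + 1) → Bool) → ℂ) (α β : Fin (n + 1) → Bool)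
    (i : Fin (n + 1)) (h : α i = β i) (hα : f α ≠ 0) (hβ : f β ≠ 0) :
    ∃ (c : Bool) (α' β' : Fin n → Bool),
      pinSig f i c α' ≠ 0 ∧ pinSig f i c β' ≠ 0 ∧
      (wt1 α' : ℤ) - wt1 β' = (wt1 α : ℤ) - wt1 β := by
  refine ⟨α i, i.removeNth α, i.removeNth β, ?_, ?_, ?_⟩
  · simpa [pinSig, Fin.insertNth_self_removeNth] using hα
  · rw [pinSig, h, Fin.insertNth_self_removeNth]; exact hβ
  · have h1 : wt1 α = (if α i then 1 else 0) + wt1 (i.removeNth α) := by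
      conv_lhs => rw [← Fin.insertNth_self_removeNth i α]
      rw [wt1_insertNth_s9]
    have h2 : wt1 β = (if α i then 1 else 0) + wt1 (i.removeNth β) := by
      conv_lhs => rw [← Fin.insertNth_self_removeNth i β]
      rw [wt1_insertNth_s9, h]
    rw [h1, h2]
    cases α i <;> push_cast <;> ring

/-- let `f` have arity `k = m + 3 ≥ 3`, let `α, β ∈ supp(f)`, and
suppose at least one of `α, β` is not the all-zero or all-one string. Then a
single operation — pinning one variable, pinning two variables, or one
`≠₂`-self-loop — yields a signature `f'` (of arity `k−1` or `k−2`) with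
strings `α', β' ∈ supp(f')` such that `#1(α') − #1(β') = #1(α) − #1(β)`. -/
theorem stmt9 {m : ℕ} (f : (Fin (m + 3) → Bool) → ℂ) (α β : Fin (m + 3) → Bool)
    (hα : f α ≠ 0) (hβ : f β ≠ 0)
    (hne : ((α ≠ fun _ => false) ∧ (α ≠ fun _ => true)) ∨
      ((β ≠ fun _ => false) ∧ (β ≠ fun _ => true))) :
    (∃ (i : Fin (m + 3)) (c : Bool) (α' β' : Fin (m + 2) → Bool),
        pinSig f i c α' ≠ 0 ∧ pinSig f i c β' ≠ 0 ∧
        (wt1 α' : ℤ) - wt1 β' = (wt1 α : ℤ) - wt1 β) ∨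
    (∃ (i : Fin (m + 3)) (c : Bool) (i' : Fin (m + 2)) (c' : Bool)
        (α' β' : Fin (m + 1) → Bool),
        pinSig (pinSig f i c) i' c' α' ≠ 0 ∧ pinSig (pinSig f i c) i' c' β' ≠ 0 ∧
        (wt1 α' : ℤ) - wt1 β' = (wt1 α : ℤ) - wt1 β) ∨
    (∃ (i : Fin (m + 3)) (j : Fin (m + 2)) (α' β' : Fin (m + 1) → Bool),
        selfLoop f i j α' ≠ 0 ∧ selfLoop f i j β' ≠ 0 ∧
        (wt1 α' : ℤ) - wt1 β' = (wt1 α : ℤ) - wt1 β) := by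
  by_cases hagree : ∃ i, α i = β i
  · obtain ⟨i, hi⟩ := hagree
    obtain ⟨c, α', β', h1, h2, h3⟩ := pin_case f α β i hi hα hβ
    exact Or.inl ⟨i, c, α', β', h1, h2, h3⟩
  push_neg at hagree
  -- β = ¬α everywhere
  have hflip : ∀ i, β i = !α i := by
    intro i; have := hagree i; cases hβi : β i <;> cases hαi : α i <;>
      simp_all
  -- α takes both values
  have hαval : (∃ i, α i = true) ∧ (∃ j, α j = false) := by
    rcases hne with ⟨h0, h1⟩ | ⟨h0, h1⟩
    · constructor
      · by_contra h; push_neg at h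
        exact h0 (funext fun i => by simpa using h i)
      · by_contra h; push_neg at h
        exact h1 (funext fun i => by simpa using h i)
    · constructor
      · by_contra h; push_neg at h
        refine h1 (funext fun i => ?_)
        have := h i; rw [hflip i]; simpa using this
      · by_contra h; push_neg at h
        refine h0 (funext fun i => ?_)
        have := h i; rw [hflip i]; simpa using this
  obtain ⟨⟨i, hi⟩, ⟨j₀, hj₀⟩⟩ := hαval
  have hij : j₀ ≠ i := by intro h; rw [h, hi] at hj₀; exact Bool.noConfusion hj₀
  obtain ⟨j, hj⟩ := Fin.exists_succAbove_eq hij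
  set α' := j.removeNth (i.removeNth α) with hα'
  set β' := j.removeNth (i.removeNth β) with hβ'
  have hβi : β i = false := by rw [hflip, hi]; rfl
  have hβj₀ : β j₀ = true := by rw [hflip, hj₀]; rfl
  have hαrec : i.insertNth true (j.insertNth false α') = α := by
    have h1 : i.removeNth α j = false := by
      simp only [Fin.removeNth, hj, hj₀]
    have h2 : j.insertNth false α' = i.removeNth α := by
      have := Fin.insertNth_self_removeNth j (i.removeNth α)
      rwa [h1] at this
    rw [h2, ← hi]
    exact Fin.insertNth_self_removeNth i α
  have hβrec : i.insertNth false (j.insertNth true β') = β := by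
    have h1 : i.removeNth β j = true := by
      simp only [Fin.removeNth, hj, hβj₀]
    have h2 : j.insertNth true β' = i.removeNth β := by
      have := Fin.insertNth_self_removeNth j (i.removeNth β)
      rwa [h1] at this
    rw [h2, ← hβi]
    exact Fin.insertNth_self_removeNth i β
  set αs : Fin (m + 3) → Bool := i.insertNth false (j.insertNth true α') with hαs
  set βs : Fin (m + 3) → Bool := i.insertNth true (j.insertNth false β') with hβs
  have hwα : (wt1 α : ℤ) = 1 + wt1 α' := by
    rw [← hαrec, wt1_insertNth_s9, wt1_insertNth_s9]; push_cast; simp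
  have hwβ : (wt1 β : ℤ) = 1 + wt1 β' := by
    rw [← hβrec, wt1_insertNth_s9, wt1_insertNth_s9]; push_cast; simp
  have hwαs : (wt1 αs : ℤ) = 1 + wt1 α' := by
    rw [hαs, wt1_insertNth_s9, wt1_insertNth_s9]; push_cast; simp
  have hwβs : (wt1 βs : ℤ) = 1 + wt1 β' := by
    rw [hβs, wt1_insertNth_s9, wt1_insertNth_s9]; push_cast; simp
  by_cases hsa : f αs = 0
  · by_cases hsb : f βs = 0
    · -- self-loop works
      refine Or.inr (Or.inr ⟨i, j, α', β', ?_, ?_, by omega⟩)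
      · rw [selfLoop, ← hαs, hsa, hαrec]; simpa using hα
      · rw [selfLoop, hβrec, ← hβs, hsb]; simpa using hβ
    · -- pin i := true with (α, βs)
      have hβsi : βs i = true := by rw [hβs, Fin.insertNth_apply_same]
      obtain ⟨c, a', b', h1, h2, h3⟩ := pin_case f α βs i (by rw [hi, hβsi]) hα hsb
      exact Or.inl ⟨i, c, a', b', h1, h2, by omega⟩
  · -- pin i := false with (αs, β)
    have hαsi : αs i = false := by rw [hαs, Fin.insertNth_apply_same]
    obtain ⟨c, a', b', h1, h2, h3⟩ := pin_case f αs β i (by rw [hαsi, hβi]) hsa hβ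
    exact Or.inl ⟨i, c, a', b', h1, h2, by omega⟩
end

section
/- For every integer k ≥ −1, the symmetric signature h_k of arity k+2, defined by h_k(α) = −k if #1(α) = 0, h_k(α) = 1 if #1(α) = 1, and h_k(α) = 0 if #1(α) ≥ 2, satisfies the identity h_k = 2·Δ₀^{⊗(k+2)} + Σ_{i=1}^{k+2} Δ₀^{⊗(i−1)} ⊗ u ⊗ Δ₀^{⊗(k+2−i)}, where u is the unary signature with u(0) = −1 and u(1) = 1 (placed at the i-th variable in the i-th summand) and the sum is taken pointwise. -/
/-- The unary signature `Δ₀ = [1,0]`, as a function of a single Boolean value. -/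
noncomputable def d0 : Bool → ℂ := fun b => if b then 0 else 1

/-- The unary signature `u = [-1,1]`, as a function of a single Boolean value. -/
noncomputable def uSig : Bool → ℂ := fun b => if b then 1 else -1

/-- for every integer `k ≥ −1`, the symmetric arity-`(k+2)`
signature `h_k` (value `−k` at Hamming weight `0`, value `1` at weight `1`,
value `0` at weight `≥ 2`) satisfies, pointwise,
`h_k = 2·Δ₀^{⊗(k+2)} + Σ_{i=1}^{k+2} Δ₀^{⊗(i−1)} ⊗ u ⊗ Δ₀^{⊗(k+2−i)}`,
where `u = [−1,1]` is placed at the `i`-th variable in the `i`-th summand. -/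
theorem stmt11 (k : ℤ) (hk : -1 ≤ k) (x : Fin (k + 2).toNat → Bool) :
    (if wt1 x = 0 then (-k : ℂ) else if wt1 x = 1 then 1 else 0) =
      2 * (∏ j, d0 (x j)) +
        ∑ i, uSig (x i) * ∏ j ∈ Finset.univ.erase i, d0 (x j) := by
  by_cases h0 : wt1 x = 0
  · have hall : ∀ i, x i = false := by
      intro i
      have he := Finset.card_eq_zero.mp h0
      have := Finset.eq_empty_iff_forall_notMem.mp he i
      simpa using this
    have hprod : (∏ j, d0 (x j)) = 1 :=
      Finset.prod_eq_one (fun j _ => by simp [hall j, d0])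
    have hterm : ∀ i ∈ (Finset.univ : Finset (Fin (k+2).toNat)),
        uSig (x i) * ∏ j ∈ Finset.univ.erase i, d0 (x j) = -1 := by
      intro i _
      have h1 : (∏ j ∈ Finset.univ.erase i, d0 (x j)) = 1 :=
        Finset.prod_eq_one (fun j _ => by simp [hall j, d0])
      simp [h1, hall i, uSig]
    rw [if_pos h0, hprod, Finset.sum_congr rfl hterm, Finset.sum_const,
      Finset.card_univ]
    have hcast : (((k+2).toNat : ℕ) : ℂ) = (k : ℂ) + 2 := by
      have h1 : (((k+2).toNat : ℤ) : ℂ) = ((k + 2 : ℤ) : ℂ) := by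
        rw [Int.toNat_of_nonneg (by omega : (0:ℤ) ≤ k + 2)]
      push_cast at h1 ⊢
      rw [h1]
    simp [Fintype.card_fin, hcast]
  · by_cases h1 : wt1 x = 1
    · obtain ⟨i0, hi0⟩ := Finset.card_eq_one.mp h1
      have hiff : ∀ j, x j = true ↔ j = i0 := by
        intro j
        constructor
        · intro hj
          have : j ∈ ({i0} : Finset _) := hi0 ▸ (by simpa using hj)
          simpa using this
        · intro hj
          subst hj
          have : j ∈ Finset.univ.filter fun i => x i = true := hi0 ▸ (by simp)
          simpa using this
      have htrue : x i0 = true := (hiff i0).mpr rfl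
      have hfalse : ∀ j, j ≠ i0 → x j = false := fun j hj => by
        cases hx : x j
        · rfl
        · exact absurd ((hiff j).mp hx) hj
      have hprod : (∏ j, d0 (x j)) = 0 :=
        Finset.prod_eq_zero (Finset.mem_univ i0) (by simp [htrue, d0])
      have hterm : ∀ i ∈ (Finset.univ : Finset (Fin (k+2).toNat)),
          uSig (x i) * ∏ j ∈ Finset.univ.erase i, d0 (x j)
            = if i = i0 then 1 else 0 := by
        intro i _
        by_cases hii : i = i0
        · subst hii
          have hp : (∏ j ∈ Finset.univ.erase i, d0 (x j)) = 1 :=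
            Finset.prod_eq_one (fun j hj => by
              simp [hfalse j (Finset.ne_of_mem_erase hj), d0])
          simp [hp, htrue, uSig]
        · have hp : (∏ j ∈ Finset.univ.erase i, d0 (x j)) = 0 :=
            Finset.prod_eq_zero (Finset.mem_erase.mpr ⟨Ne.symm hii, Finset.mem_univ _⟩)
              (by simp [htrue, d0])
          simp [hp, hii]
      rw [if_neg h0, if_pos h1, hprod, Finset.sum_congr rfl hterm]
      simp
    · have h2 : 1 < wt1 x := by omega
      obtain ⟨a, ha, b, hb, hab⟩ := Finset.one_lt_card.mp h2
      have hxa : x a = true := by simpa using ha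
      have hxb : x b = true := by simpa using hb
      have hprod : (∏ j, d0 (x j)) = 0 :=
        Finset.prod_eq_zero (Finset.mem_univ a) (by simp [hxa, d0])
      have hterm : ∀ i ∈ (Finset.univ : Finset (Fin (k+2).toNat)),
          uSig (x i) * ∏ j ∈ Finset.univ.erase i, d0 (x j) = 0 := by
        intro i _
        rcases ne_or_eq i a with hia | hia
        · have hp : (∏ j ∈ Finset.univ.erase i, d0 (x j)) = 0 :=
            Finset.prod_eq_zero (Finset.mem_erase.mpr ⟨Ne.symm hia, Finset.mem_univ _⟩)
              (by simp [hxa, d0])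
          simp [hp]
        · subst hia
          have hp : (∏ j ∈ Finset.univ.erase i, d0 (x j)) = 0 :=
            Finset.prod_eq_zero (Finset.mem_erase.mpr ⟨Ne.symm hab, Finset.mem_univ _⟩)
              (by simp [hxb, d0])
          simp [hp]
      rw [if_neg h0, if_neg h1, hprod, Finset.sum_congr rfl hterm]
      simp
end
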